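/- Let r ≥ m ≥ 2 and r ≥ 2^{m−1} + 1. Define B_{r,m} = {a ∈ A_{r,m} : wt(a) ≤ m−2 and supp(a) ⊆ {1,...,r−2^{m−1}}}, where A_{r,m} = {a ∈ F_2^r : a_1 = 1, wt(a) ≤ m}. Then A_{r,m} \ B_{r,m} is a generic (r,m)-erasure correcting set. -/

import Mathlib

open Matrix

/-- Hamming weight of a binary vector. -/
def wt {n : ℕ} (v : Fin n → ZMod 2) : ℕ :=
  (Finset.univ.filter (fun j => v j ≠ 0)).card

/-- `A` is a generic `(r,m)`-erasure reducing set. -/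
def GenRed (r m : ℕ) (A : Set (Fin r → ZMod 2)) : Prop :=
  ∀ M : Matrix (Fin r) (Fin m) (ZMod 2), M.rank = m →
    ∃ a ∈ A, wt (Matrix.vecMul a M) = 1

/-- `A` is a generic `(r,m)`-erasure correcting set. -/
def GenCor (r m : ℕ) (A : Set (Fin r → ZMod 2)) : Prop :=
  ∀ m', 1 ≤ m' → m' ≤ m → GenRed r m' A

/-- The set `A_{r,m}` of vectors with first coordinate `1` and weight at most `m`. -/
def Arm (r m : ℕ) (h : 0 < r) : Set (Fin r → ZMod 2) :=
  {a | a ⟨0, h⟩ = 1 ∧ wt a ≤ m}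

/-- The set `B_{r,m}` of vectors of `A_{r,m}` of weight at most `m-2` supported on the
first `r - 2^{m-1}` coordinates. -/
def Brm (r m : ℕ) (h : 0 < r) : Set (Fin r → ZMod 2) :=
  {a | a ∈ Arm r m h ∧ wt a ≤ m - 2 ∧ ∀ i : Fin r, a i ≠ 0 → (i : ℕ) < r - 2 ^ (m - 1)}

section Auxiliary

open Finset Submodule

instance : Fact (Nat.Prime 2) := ⟨Nat.prime_two⟩

lemma zmod2_eq_one : ∀ {c : ZMod 2}, c ≠ 0 → c = 1 := by decide

lemma zmod2_add_self : ∀ c : ZMod 2, c + c = 0 := by decide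

/-- The indicator vector of a finite set of coordinates. -/
def chi {r : ℕ} (S : Finset (Fin r)) : Fin r → ZMod 2 :=
  fun i => if i ∈ S then 1 else 0

lemma chi_ne_zero_iff {r : ℕ} (S : Finset (Fin r)) (i : Fin r) :
    chi S i ≠ 0 ↔ i ∈ S := by
  by_cases h : i ∈ S <;> simp [chi, h]

lemma wt_chi {r : ℕ} (S : Finset (Fin r)) : wt (chi S) = S.card := by
  unfold wt
  congr 1
  ext i
  simp [chi_ne_zero_iff]

lemma vecMul_chi {r k : ℕ} (S : Finset (Fin r)) (M : Matrix (Fin r) (Fin k) (ZMod 2)) :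
    Matrix.vecMul (chi S) M = ∑ i ∈ S, M i := by
  funext l
  rw [Finset.sum_apply (g := fun i => M i)]
  simp only [Matrix.vecMul, dotProduct, chi, ite_mul, one_mul, zero_mul]
  rw [Finset.sum_ite_mem, Finset.univ_inter]

lemma wt_single {k : ℕ} (j : Fin k) : wt (Pi.single j (1 : ZMod 2)) = 1 := by
  unfold wt
  rw [Finset.card_eq_one]
  refine ⟨j, ?_⟩
  ext l
  by_cases h : l = j <;> simp [Pi.single_apply, h]

lemma single_one_inj {k : ℕ} {j j' : Fin k}
    (h : Pi.single j (1 : ZMod 2) = (Pi.single j' 1 : Fin k → ZMod 2)) : j = j' := by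
  by_contra hne
  have h1 := congrFun h j
  simp [Pi.single_apply, hne] at h1

lemma span_rows_eq_top {r k : ℕ} (M : Matrix (Fin r) (Fin k) (ZMod 2)) (h : M.rank = k) :
    Submodule.span (ZMod 2) (Set.range M) = ⊤ := by
  erw [← range_vecMulLinear M]
  apply Submodule.eq_top_of_finrank_eq
  rw [Module.finrank_fin_fun]
  rw [← Matrix.mulVecLin_transpose]
  exact (Matrix.rank_transpose M).trans h

lemma sum_repr_support {k : ℕ} {b : Set (Fin k → ZMod 2)} [Fintype b]
    (B : Module.Basis b (ZMod 2) (Fin k → ZMod 2)) (hB : ∀ v : b, B v = ↑v) (x : Fin k → ZMod 2) :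
    ∑ v ∈ (B.repr x).support, (v : Fin k → ZMod 2) = x := by
  calc ∑ v ∈ (B.repr x).support, (v : Fin k → ZMod 2)
      = ∑ v ∈ (B.repr x).support, B.repr x v • B v := by
        refine Finset.sum_congr rfl fun v hv => ?_
        rw [hB, zmod2_eq_one (Finsupp.mem_support_iff.mp hv), one_smul]
    _ = ∑ v : b, B.repr x v • B v := by
        refine Finset.sum_subset (Finset.subset_univ _) fun v _ hv => ?_
        rw [Finsupp.notMem_support_iff.mp hv, zero_smul]
    _ = x := B.sum_repr x

/-- The basic construction: if the rows of `M` span the whole space, there is a subset of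
rows containing row `0`, of size at most `max k 2`, summing to a standard basis vector. -/
lemma base_lemma {r k : ℕ} (hr : 0 < r) (hk : 0 < k) (M : Matrix (Fin r) (Fin k) (ZMod 2))
    (hspan : Submodule.span (ZMod 2) (Set.range M) = ⊤) :
    ∃ S : Finset (Fin r), (⟨0, hr⟩ : Fin r) ∈ S ∧ S.card ≤ max k 2 ∧
      ∃ j : Fin k, ∑ i ∈ S, M i = Pi.single j 1 := by
  classical
  set i₀ : Fin r := ⟨0, hr⟩ with hi₀def
  by_cases h0 : M i₀ = 0
  · -- the first row is zero
    obtain ⟨b, hbsub, hbspan, hbli⟩ := exists_linearIndependent (ZMod 2) (Set.range M)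
    rw [hspan] at hbspan
    haveI : Fintype b := Fintype.ofFinite b
    obtain ⟨B, hBapp⟩ : ∃ B : Module.Basis b (ZMod 2) (Fin k → ZMod 2), ∀ v : b, B v = ↑v :=
      ⟨Module.Basis.mk hbli (by rw [Subtype.range_coe]; exact hbspan.ge),
        fun v => Module.Basis.mk_apply _ _ v⟩
    have hcard : Fintype.card b = k := by
      rw [← Module.finrank_eq_card_basis B, Module.finrank_fin_fun]
    have hchoice : ∀ v : b, ∃ i : Fin r, M i = ↑v := fun v => hbsub v.2
    choose idx hidx using hchoice
    have hidxinj : Function.Injective idx := fun v w h => by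
      apply Subtype.ext
      rw [← hidx v, ← hidx w, h]
    have hidx0 : ∀ v : b, idx v ≠ i₀ := by
      intro v h
      apply hbli.ne_zero v
      rw [← hidx v, h, h0]
    -- find a good standard basis vector
    have hexistsj : ∃ j : Fin k, ((B.repr (Pi.single j 1)).support).card ≤ max k 2 - 1 := by
      rcases Nat.lt_or_ge k 2 with hk2 | hk2
      · refine ⟨⟨0, hk⟩, ?_⟩
        have h1 : ((B.repr (Pi.single (⟨0, hk⟩ : Fin k) 1)).support).card ≤ Fintype.card b :=
          Finset.card_le_univ _
      
        omega
      · by_contra hall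
        push_neg at hall
        have hfull : ∀ j : Fin k, (B.repr (Pi.single j 1)).support = Finset.univ := by
          intro j
          apply Finset.eq_univ_of_card
          have h1 := hall j
          have h2 : ((B.repr (Pi.single j 1)).support).card ≤ Fintype.card b :=
            Finset.card_le_univ _
          have h3 : max k 2 = k := max_eq_left hk2
          omega
        have hconst : ∀ j : Fin k, Pi.single j (1 : ZMod 2) = ∑ v : b, (v : Fin k → ZMod 2) := by
          intro j
          conv_lhs => rw [← sum_repr_support B hBapp (Pi.single j 1)]
          rw [hfull j]
        have h01 : (⟨0, by omega⟩ : Fin k) ≠ ⟨1, by omega⟩ := by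
          intro h
          exact absurd (congrArg Fin.val h) (by simp)
        exact h01 (single_one_inj ((hconst _).trans (hconst _).symm))
    obtain ⟨j, hj⟩ := hexistsj
    set Z := (B.repr (Pi.single j 1)).support with hZdef
    have hnotmem : i₀ ∉ Z.image idx := by
      intro h
      obtain ⟨v, _, hv⟩ := Finset.mem_image.mp h
      exact hidx0 v hv
    refine ⟨insert i₀ (Z.image idx), Finset.mem_insert_self _ _, ?_, j, ?_⟩
    · rw [Finset.card_insert_of_notMem hnotmem]
      have h1 : (Z.image idx).card ≤ Z.card := Finset.card_image_le
      have h2 : (2 : ℕ) ≤ max k 2 := le_max_right _ _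
      omega
    · rw [Finset.sum_insert (f := fun i => M i) hnotmem, h0, zero_add,
        Finset.sum_image (f := fun i => M i) (fun (x : b) _ (y : b) _ h => hidxinj h)]
      calc ∑ v ∈ Z, M (idx v) = ∑ v ∈ Z, (v : Fin k → ZMod 2) :=
            Finset.sum_congr rfl fun v _ => hidx v
        _ = Pi.single j 1 := sum_repr_support B hBapp _
  · -- the first row is nonzero
    have hsing : LinearIndependent (ZMod 2)
        (fun x => x : ({M i₀} : Set (Fin k → ZMod 2)) → Fin k → ZMod 2) :=
      (linearIndepOn_singleton_iff (ZMod 2) (v := id)).mpr h0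
    have hsub : ({M i₀} : Set (Fin k → ZMod 2)) ⊆ Set.range M :=
      Set.singleton_subset_iff.mpr ⟨i₀, rfl⟩
    set b := LinearIndepOn.extend (v := id) hsing hsub with hbdef
    have hbsub : b ⊆ Set.range M := LinearIndepOn.extend_subset (v := id) hsing hsub
    have hmem0 : M i₀ ∈ b := LinearIndepOn.subset_extend (v := id) hsing hsub rfl
    have hbli : LinearIndependent (ZMod 2) (fun x => x : b → Fin k → ZMod 2) :=
      LinearIndepOn.linearIndepOn_extend (v := id) hsing hsub
    have hbspan : Submodule.span (ZMod 2) b = ⊤ := by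
      apply top_unique
      rw [← hspan]
      exact Submodule.span_le.mpr (LinearIndepOn.subset_span_extend hsing hsub)
    haveI : Fintype b := Fintype.ofFinite b
    obtain ⟨B, hBapp⟩ : ∃ B : Module.Basis b (ZMod 2) (Fin k → ZMod 2), ∀ v : b, B v = ↑v :=
      ⟨Module.Basis.mk hbli (by rw [Subtype.range_coe]; exact hbspan.ge),
        fun v => Module.Basis.mk_apply _ _ v⟩
    have hcard : Fintype.card b = k := by
      rw [← Module.finrank_eq_card_basis B, Module.finrank_fin_fun]
    have hchoice : ∀ v : b, ∃ i : Fin r, M i = ↑v := fun v => hbsub v.2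
    choose idx0 hidx0 using hchoice
    let idx : b → Fin r := fun v => if (v : Fin k → ZMod 2) = M i₀ then i₀ else idx0 v
    have hidx : ∀ v : b, M (idx v) = ↑v := by
      intro v
      by_cases h : (v : Fin k → ZMod 2) = M i₀
      · simp only [idx, if_pos h]; exact h.symm
      · simp only [idx, if_neg h]; exact hidx0 v
    have hidxinj : Function.Injective idx := fun v w h => by
      apply Subtype.ext
      rw [← hidx v, ← hidx w, h]
    set v₀ : b := ⟨M i₀, hmem0⟩ with hv₀def
    have hidxv₀ : idx v₀ = i₀ := by simp [idx, hv₀def]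
    -- there is a standard basis vector whose expansion uses `M i₀`
    have hexj : ∃ j : Fin k, B.repr (Pi.single j 1) v₀ ≠ 0 := by
      by_contra hall
      push_neg at hall
      have hx : ∀ x : Fin k → ZMod 2, B.repr x v₀ = 0 := by
        intro x
        have hxsum : x = ∑ l : Fin k, Pi.single l (x l) := (Finset.univ_sum_single x).symm
        rw [hxsum, map_sum, Finsupp.finset_sum_apply]
        apply Finset.sum_eq_zero
        intro l _
        have hsm : Pi.single l (x l) = x l • (Pi.single l 1 : Fin k → ZMod 2) := by
          funext t
          by_cases h : t = l <;> simp [Pi.single_apply, h]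
        rw [hsm, _root_.map_smul, Finsupp.smul_apply, hall l, smul_zero]
      have h1 : B.repr (B v₀) v₀ = 1 := by rw [Module.Basis.repr_self]; simp
      rw [hBapp v₀] at h1
      rw [hx] at h1
      exact one_ne_zero h1.symm
    obtain ⟨j, hjne⟩ := hexj
    set Z := (B.repr (Pi.single j 1)).support with hZdef
    have hv₀Z : v₀ ∈ Z := Finsupp.mem_support_iff.mpr hjne
    refine ⟨Z.image idx, ?_, ?_, j, ?_⟩
    · rw [← hidxv₀]; exact Finset.mem_image_of_mem idx hv₀Z
    · calc (Z.image idx).card ≤ Z.card := Finset.card_image_le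
        _ ≤ Fintype.card b := Finset.card_le_univ _
        _ = k := hcard
        _ ≤ max k 2 := le_max_left _ _
    · rw [Finset.sum_image (f := fun i => M i) (fun (x : b) _ (y : b) _ h => hidxinj h)]
      calc ∑ v ∈ Z, M (idx v) = ∑ v ∈ Z, (v : Fin k → ZMod 2) :=
            Finset.sum_congr rfl fun v _ => hidx v
        _ = Pi.single j 1 := sum_repr_support B hBapp _

end Auxiliary

theorem stmt_18 (r m : ℕ) (hm : 2 ≤ m) (hr : m ≤ r) (hbig : 2 ^ (m - 1) + 1 ≤ r) :
    GenCor r m (Arm r m (by omega) \ Brm r m (by omega)) := by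
  classical
  intro m' hm'1 hm'm M hrank
  have hr0 : 0 < r := by omega
  set i₀ : Fin r := ⟨0, hr0⟩ with hi₀def
  have hspan := span_rows_eq_top M hrank
  obtain ⟨S₀, hS₀0, hS₀card, j₀, hS₀sum⟩ := base_lemma hr0 (by omega) M hspan
  have hS₀m : S₀.card ≤ m := le_trans hS₀card (max_le hm'm hm)
  -- A sufficient criterion for producing a witness.
  have key : ∀ S : Finset (Fin r), i₀ ∈ S → S.card ≤ m →
      ((∃ t ∈ S, r - 2 ^ (m - 1) ≤ (t : ℕ)) ∨ m - 2 < S.card) →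
      (∃ j : Fin m', ∑ i ∈ S, M i = Pi.single j 1) →
      ∃ a ∈ Arm r m (by omega) \ Brm r m (by omega), wt (Matrix.vecMul a M) = 1 := by
    rintro S h0 hcard hnotB ⟨j, hsum⟩
    refine ⟨chi S, ⟨⟨?_, ?_⟩, ?_⟩, ?_⟩
    · exact if_pos h0
    · rw [wt_chi]; exact hcard
    · intro hB
      obtain ⟨-, hw, hsupp⟩ := hB
      rcases hnotB with ⟨t, htS, ht⟩ | hc
      · have h2 := hsupp t ((chi_ne_zero_iff S t).mpr htS)
        omega
      · rw [wt_chi] at hw; omega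
    · rw [vecMul_chi, hsum, wt_single]
  by_cases hB : S₀.card ≤ m - 2 ∧ ∀ t ∈ S₀, (t : ℕ) < r - 2 ^ (m - 1)
  case neg =>
    apply key S₀ hS₀0 hS₀m ?_ ⟨j₀, hS₀sum⟩
    by_cases hc : S₀.card ≤ m - 2
    · push_neg at hB
      exact Or.inl (hB hc)
    · exact Or.inr (by omega)
  case pos =>
    obtain ⟨hBcard, hBsupp⟩ := hB
    have hS₀pos : 0 < S₀.card := Finset.card_pos.mpr ⟨i₀, hS₀0⟩
    have hm3 : 3 ≤ m := by omega
    set c : ℕ := r - 2 ^ (m - 1) with hcdef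
    have hc1 : 1 ≤ c := by omega
    set T : Finset (Fin r) := Finset.univ.filter (fun i : Fin r => c ≤ (i : ℕ)) with hTdef
    have hTS₀ : ∀ t ∈ T, t ∉ S₀ := by
      intro t ht hts
      have h1 := hBsupp t hts
      have h2 := (Finset.mem_filter.mp ht).2
      omega
    have hTnot : ∀ t ∈ T, c ≤ (t : ℕ) := fun t ht => (Finset.mem_filter.mp ht).2
    by_cases hz : ∃ t ∈ T, M t = 0
    · obtain ⟨t, htT, htz⟩ := hz
      have htS₀ := hTS₀ t htT
      apply key (insert t S₀) (Finset.mem_insert_of_mem hS₀0) ?_ ?_ ⟨j₀, ?_⟩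
      · rw [Finset.card_insert_of_notMem htS₀]; omega
      · exact Or.inl ⟨t, Finset.mem_insert_self _ _, hTnot t htT⟩
      · rw [Finset.sum_insert (f := fun i => M i) htS₀, htz, zero_add]; exact hS₀sum
    by_cases hrep : ∃ s ∈ T, ∃ t ∈ T, s ≠ t ∧ M s = M t
    · obtain ⟨s, hsT, t, htT, hst, hMst⟩ := hrep
      have hsS₀ := hTS₀ s hsT
      have htS₀ := hTS₀ t htT
      have hsmem : s ∉ insert t S₀ := by
        intro h
        rcases Finset.mem_insert.mp h with h | h
        · exact hst h
        · exact hsS₀ h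
      apply key (insert s (insert t S₀)) ?_ ?_ ?_ ⟨j₀, ?_⟩
      · exact Finset.mem_insert_of_mem (Finset.mem_insert_of_mem hS₀0)
      · rw [Finset.card_insert_of_notMem hsmem, Finset.card_insert_of_notMem htS₀]; omega
      · exact Or.inl ⟨s, Finset.mem_insert_self _ _, hTnot s hsT⟩
      · rw [Finset.sum_insert (f := fun i => M i) hsmem, Finset.sum_insert (f := fun i => M i) htS₀, ← add_assoc, hMst]
        have : M t + M t = 0 := by funext l; exact zmod2_add_self (M t l)
        rw [this, zero_add]; exact hS₀sum
    -- main case: the rows indexed by `T` are distinct and nonzero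
    push_neg at hz hrep
    have hTcard : T.card = 2 ^ (m - 1) := by
      have hbij : T.card = (Finset.Ico c r).card := by
        refine Finset.card_nbij (fun t => (t : ℕ)) ?_ ?_ ?_
        · intro a ha
          rw [Finset.mem_coe, Finset.mem_Ico]
          exact ⟨(Finset.mem_filter.mp ha).2, a.isLt⟩
        · intro a _ b _ h
          exact Fin.val_injective h
        · intro n hn
          simp only [Finset.coe_Ico, Set.mem_Ico] at hn
          refine ⟨⟨n, hn.2⟩, ?_, rfl⟩
          exact Finset.mem_coe.mpr (Finset.mem_filter.mpr ⟨Finset.mem_univ _, hn.1⟩)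
      rw [hbij, Nat.card_Ico, hcdef]
      have h2 : 0 < 2 ^ (m - 1) := Nat.pow_pos (by omega)
      omega
    have hinjOn : Set.InjOn M ↑T := by
      intro s hs t ht hMst
      by_contra hst
      exact hrep s hs t ht hst hMst
    have hVcard : (T.image M).card = 2 ^ (m - 1) := by
      rw [Finset.card_image_of_injOn hinjOn, hTcard]
    have h0V : (0 : Fin m' → ZMod 2) ∉ T.image M := by
      intro h
      obtain ⟨t, ht, htz⟩ := Finset.mem_image.mp h
      exact hz t ht htz
    -- deduce that m' = m
    have hm'eq : m' = m := by
      by_contra hne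
      have hlt : m' < m := lt_of_le_of_ne hm'm hne
      have hsubset : T.image M ⊆ Finset.univ.erase 0 := by
        intro v hv
        exact Finset.mem_erase.mpr ⟨fun h => h0V (h ▸ hv), Finset.mem_univ _⟩
      have h2 : Fintype.card (Fin m' → ZMod 2) = 2 ^ m' := by
        rw [Fintype.card_fun, ZMod.card, Fintype.card_fin]
      have h1 : 2 ^ (m - 1) ≤ 2 ^ m' - 1 := by
        calc 2 ^ (m - 1) = (T.image M).card := hVcard.symm
          _ ≤ (Finset.univ.erase (0 : Fin m' → ZMod 2)).card := Finset.card_le_card hsubset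
          _ = Fintype.card (Fin m' → ZMod 2) - 1 := by
              rw [Finset.card_erase_of_mem (Finset.mem_univ _), Finset.card_univ]
          _ = 2 ^ m' - 1 := by rw [h2]
      have h3 : (2 : ℕ) ^ m' ≤ 2 ^ (m - 1) := Nat.pow_le_pow_right (by omega) (by omega)
      have h4 : (0 : ℕ) < 2 ^ m' := Nat.pow_pos (by omega)
      omega
    subst hm'eq
    -- the rows indexed by T span everything
    set V : Finset (Fin m' → ZMod 2) := T.image M with hVdef
    have hspanV : Submodule.span (ZMod 2) (↑V : Set (Fin m' → ZMod 2)) = ⊤ := by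
      set W := Submodule.span (ZMod 2) (↑V : Set (Fin m' → ZMod 2)) with hWdef
      haveI : Fintype W := Fintype.ofFinite W
      have hle : (insert (0 : Fin m' → ZMod 2) V).card ≤ Fintype.card W := by
        rw [← Fintype.card_coe]
        refine Fintype.card_le_of_injective (fun x => ⟨x.1, ?_⟩) ?_
        · rcases Finset.mem_insert.mp x.2 with h | h
          · rw [h]; exact W.zero_mem
          · exact Submodule.subset_span h
        · intro x y hxy
          have h := congrArg Subtype.val hxy
          exact Subtype.ext h
      rw [Finset.card_insert_of_notMem h0V, hVcard] at hle
      have hcardW : Fintype.card W = 2 ^ Module.finrank (ZMod 2) W := by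
        have := Module.card_eq_pow_finrank (K := ZMod 2) (V := W)
        rwa [ZMod.card] at this
      have hfinle : Module.finrank (ZMod 2) W ≤ m' := by
        have h1 := Submodule.finrank_le W
        rwa [Module.finrank_fin_fun] at h1
      have hfineq : Module.finrank (ZMod 2) W = m' := by
        by_contra hne
        have h5 : Module.finrank (ZMod 2) W ≤ m' - 1 := by omega
        have h6 : (2 : ℕ) ^ Module.finrank (ZMod 2) W ≤ 2 ^ (m' - 1) :=
          Nat.pow_le_pow_right (by omega) h5
        rw [hcardW] at hle
        omega
      apply Submodule.eq_top_of_finrank_eq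
      rw [hfineq, Module.finrank_fin_fun]
    obtain ⟨b, hbsub, hbspan, hbli⟩ := exists_linearIndependent (ZMod 2) (↑V : Set (Fin m' → ZMod 2))
    rw [hspanV] at hbspan
    haveI : Fintype b := Fintype.ofFinite b
    obtain ⟨B, hBapp⟩ : ∃ B : Module.Basis b (ZMod 2) (Fin m' → ZMod 2), ∀ v : b, B v = ↑v :=
      ⟨Module.Basis.mk hbli (by rw [Subtype.range_coe]; exact hbspan.ge),
        fun v => Module.Basis.mk_apply _ _ v⟩
    have hcardb : Fintype.card b = m' := by
      rw [← Module.finrank_eq_card_basis B, Module.finrank_fin_fun]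
    have hchoice : ∀ v : b, ∃ t : Fin r, t ∈ T ∧ M t = ↑v := by
      intro v
      obtain ⟨t, ht, htv⟩ := Finset.mem_image.mp (hbsub v.2)
      exact ⟨t, ht, htv⟩
    choose idx hidxT hidx using hchoice
    have hidxinj : Function.Injective idx := fun v w h => by
      apply Subtype.ext
      rw [← hidx v, ← hidx w, h]
    -- the expansions of the targets
    set Z : Fin m' → Finset b := fun j => (B.repr (M i₀ + Pi.single j 1)).support with hZdef
    have hZsum : ∀ j, ∑ v ∈ Z j, (v : Fin m' → ZMod 2) = M i₀ + Pi.single j 1 :=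
      fun j => sum_repr_support B hBapp _
    have hZinj : Function.Injective Z := by
      intro j j' h
      have h1 : M i₀ + Pi.single j (1 : ZMod 2) = M i₀ + Pi.single j' 1 := by
        rw [← hZsum j, ← hZsum j', h]
      exact single_one_inj (add_left_cancel h1)
    have hgood : ∃ j : Fin m', Z j ≠ ∅ ∧ Z j ≠ Finset.univ := by
      by_contra hall
      push_neg at hall
      have himg : (Finset.univ.image Z) ⊆ {∅, Finset.univ} := by
        intro x hx
        obtain ⟨j, _, hj⟩ := Finset.mem_image.mp hx
        by_cases h : Z j = ∅
        · rw [← hj, h]; exact Finset.mem_insert_self _ _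
        · rw [← hj, hall j (Finset.nonempty_iff_ne_empty.mpr h)]
          exact Finset.mem_insert_of_mem (Finset.mem_singleton_self _)
      have h1 : (Finset.univ.image Z).card = m' := by
        rw [Finset.card_image_of_injective _ hZinj, Finset.card_univ, Fintype.card_fin]
      have h2 : ({∅, Finset.univ} : Finset (Finset b)).card ≤ 2 := by
        apply le_trans (Finset.card_insert_le _ _)
        rw [Finset.card_singleton]
      have h3 := Finset.card_le_card himg
      omega
    obtain ⟨j, hjne, hjnuniv⟩ := hgood
    have hZcard : (Z j).card ≤ m' - 1 := by
      have h1 : Z j ⊂ Finset.univ := Finset.ssubset_univ_iff.mpr hjnuniv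
      have h2 := Finset.card_lt_card h1
      rw [Finset.card_univ, hcardb] at h2
      omega
    have hmemT : ∀ v : b, idx v ∈ T := hidxT
    have hnotmem : i₀ ∉ (Z j).image idx := by
      intro h
      obtain ⟨v, _, hv⟩ := Finset.mem_image.mp h
      have h1 := hTnot (idx v) (hmemT v)
      rw [hv] at h1
      simp only [hi₀def] at h1
      omega
    apply key (insert i₀ ((Z j).image idx)) (Finset.mem_insert_self _ _) ?_ ?_ ⟨j, ?_⟩
    · rw [Finset.card_insert_of_notMem hnotmem]
      have h1 : ((Z j).image idx).card ≤ (Z j).card := Finset.card_image_le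
      omega
    · obtain ⟨v, hv⟩ := Finset.nonempty_iff_ne_empty.mpr hjne
      refine Or.inl ⟨idx v, Finset.mem_insert_of_mem (Finset.mem_image_of_mem idx hv),
        hTnot (idx v) (hmemT v)⟩
    · rw [Finset.sum_insert (f := fun i => M i) hnotmem, Finset.sum_image (f := fun i => M i) (fun (x : b) _ (y : b) _ h => hidxinj h)]
      have h1 : ∑ v ∈ Z j, M (idx v) = M i₀ + Pi.single j 1 := by
        rw [← hZsum j]
        exact Finset.sum_congr rfl fun v _ => hidx v
      rw [h1, ← add_assoc]
      have h2 : M i₀ + M i₀ = 0 := by funext l; exact zmod2_add_self (M i₀ l)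
      rw [h2, zero_add]
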